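/- There exists c₀ ∈ (0, c_crit) such that for every c with c₀ < c < c_crit, there is no solution h : [0, 1] → (-1, 1) of the transformed Jang equation dh/ds = F_c(s, h(s)) with h(0) = 0. (Equivalently, the maximal solution h_c with h_c(0) = 0 attains the value -1 at some s* ∈ (0, 1].) -/

import Mathlib

/-- The function `φ(r) = e^{r/(2m)-1}(r - 2m)` defining the Kruskal radius implicitly. -/
noncomputable def phi (m r : ℝ) : ℝ := Real.exp (r / (2*m) - 1) * (r - 2*m)

/-- The derivative `φ_r(r) = (r/(2m)) e^{r/(2m)-1}`. -/
noncomputable def phiR (m r : ℝ) : ℝ := (r / (2*m)) * Real.exp (r / (2*m) - 1)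

/-- The critical parameter `c_crit = √(8m/e)`. -/
noncomputable def cCrit (m : ℝ) : ℝ := Real.sqrt (8*m / Real.exp 1)

/-- The right-hand side of Jang's equation on the slice `L_c`:
`f''(u) = jangRHS m c u r (f'(u))` where `r = r(u)` solves `φ(r) = u(u+c)`. -/
noncomputable def jangRHS (m c u r p : ℝ) : ℝ :=
  c * Real.sqrt (2*m / phiR m r + p^2/4) *
      ((1 / phiR m r) * (1/(2*m) - 3/r) - p^2/(2*m*r))
    - ((2*u + c)/(4*m*r)) * p^3
    - ((2*u + c)/(2 * phiR m r)) * (1/(2*m) + 5/r) * p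

/-- The right-hand side `F_c(s,h)` of the transformed Jang equation,
with `r = r_c(s)` solving `φ(r) = (c²/4)(s²-1)`. -/
noncomputable def Fc (m c s r h : ℝ) : ℝ :=
  (c^2/2) * Real.sqrt (2*m*(1 - h^2) / phiR m r + h^2/4) *
      (((1 - h^2) / phiR m r) * (1/(2*m) - 3/r) - h^2/(2*m*r))
    - (c^2*s/(8*m*r)) * h^3
    - (c^2*s/(4 * phiR m r)) * (1/(2*m) + 5/r) * (h*(1 - h^2))

set_option maxHeartbeats 1000000

lemma phi_hasDerivAt (m : ℝ) (hm : 0 < m) (r : ℝ) :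
    HasDerivAt (phi m) (phiR m r) r := by
  have h1 : HasDerivAt (fun r : ℝ => r / (2*m) - 1) (1/(2*m)) r := by
    simpa using ((hasDerivAt_id r).div_const (2*m)).sub_const 1
  have h2 := h1.exp
  have h3 : HasDerivAt (fun r : ℝ => r - 2*m) 1 r := (hasDerivAt_id r).sub_const _
  have h4 := h2.mul h3
  have hm' : (2*m) ≠ 0 := by positivity
  refine h4.congr_deriv ?_
  unfold phiR
  field_simp
  ring

lemma phi_strictMonoOn (m : ℝ) (hm : 0 < m) : StrictMonoOn (phi m) (Set.Ici 0) := by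
  apply strictMonoOn_of_deriv_pos (convex_Ici 0)
  · exact fun x _ => ((phi_hasDerivAt m hm x).continuousAt).continuousWithinAt
  · intro x hx
    rw [interior_Ici] at hx
    rw [(phi_hasDerivAt m hm x).deriv]
    unfold phiR
    have : 0 < x := hx
    positivity

lemma exp_taylor_ineq : ∀ x ∈ Set.Icc (0:ℝ) 1, (1 - x) * Real.exp x ≤ 1 - x^2/2 := by
  have hmono : MonotoneOn (fun x : ℝ => 1 - x^2/2 - (1 - x) * Real.exp x) (Set.Icc (0:ℝ) 1) := by
    apply monotoneOn_of_deriv_nonneg (convex_Icc 0 1)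
    · fun_prop
    · apply Differentiable.differentiableOn; fun_prop
    · intro x hx
      rw [interior_Icc] at hx
      have hd : HasDerivAt (fun x : ℝ => 1 - x^2/2 - (1 - x) * Real.exp x)
          (x * (Real.exp x - 1)) x := by
        have h1 : HasDerivAt (fun x : ℝ => 1 - x^2/2) (-x) x := by
          simpa using ((hasDerivAt_pow 2 x).div_const 2).const_sub 1
        have h2 : HasDerivAt (fun x : ℝ => (1 - x) * Real.exp x)
            ((-1) * Real.exp x + (1 - x) * Real.exp x) x := by
          exact (((hasDerivAt_id x).const_sub 1)).mul (Real.hasDerivAt_exp x)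
        refine (h1.sub h2).congr_deriv ?_
        ring
      rw [hd.deriv]
      have h3 : (1:ℝ) ≤ Real.exp x := by
        rw [show (1:ℝ) = Real.exp 0 by simp]
        exact Real.exp_le_exp.2 hx.1.le
      nlinarith [hx.1.le]
  intro x hx
  have := hmono (Set.left_mem_Icc.2 zero_le_one) hx hx.1
  simp at this
  nlinarith [this]

lemma phi_5m (m δ : ℝ) (hm : 0 < m) (hδ0 : 0 ≤ δ) (hδ1 : δ ≤ 1/500) :
    (2*m/Real.exp 1) * (25*δ^2/8 - 1) ≤ phi m (5*m*δ) := by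
  have hx : (5*δ/2) ∈ Set.Icc (0:ℝ) 1 := by constructor <;> nlinarith
  have h2 := exp_taylor_ineq _ hx
  have he : 0 < Real.exp 1 := Real.exp_pos 1
  have h3 : 0 < Real.exp (5*δ/2) := Real.exp_pos _
  have hexp : Real.exp (5*δ/2 - 1) = Real.exp (5*δ/2) / Real.exp 1 := Real.exp_sub _ _
  unfold phi
  have harg : 5*m*δ / (2*m) - 1 = 5*δ/2 - 1 := by field_simp
  rw [harg, hexp]
  have goal : 2*m*(25*δ^2/8 - 1) ≤ Real.exp (5*δ/2) * (5*m*δ - 2*m) := by nlinarith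
  calc (2*m/Real.exp 1) * (25*δ^2/8 - 1) = 2*m*(25*δ^2/8-1) / Real.exp 1 := by ring
    _ ≤ Real.exp (5*δ/2) * (5*m*δ - 2*m) / Real.exp 1 := by
        exact div_le_div_of_nonneg_right goal he.le
    _ = Real.exp (5*δ/2) / Real.exp 1 * (5*m*δ - 2*m) := by ring

lemma r_bounds (m δ c s r : ℝ) (hm : 0 < m) (hδ0 : 0 < δ) (hδ1 : δ ≤ 1/500)
    (hclow : (8*m/Real.exp 1) * (1 - δ^2) ≤ c^2) (hc : c^2 ≤ 8*m/Real.exp 1)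
    (hs0 : 0 ≤ s) (hs1 : s ≤ δ) (hr : 0 < r)
    (hphi : phi m r = c^2/4 * (s^2 - 1)) :
    r ≤ 2*m ∧ r ≤ 5*m*δ := by
  have he : 0 < Real.exp 1 := Real.exp_pos 1
  have hM : 0 < 2*m/Real.exp 1 := by positivity
  have hneg : phi m r < 0 := by
    rw [hphi]
    have h1 : s^2 - 1 < 0 := by nlinarith
    have h2 : 0 < c^2 := by nlinarith [mul_pos (by positivity : (0:ℝ) < 8*m/Real.exp 1) (by nlinarith : (0:ℝ) < 1 - δ^2)]
    nlinarith
  constructor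
  · unfold phi at hneg
    nlinarith [Real.exp_pos (r / (2*m) - 1)]
  · by_contra hcon
    push_neg at hcon
    have h5 : phi m (5*m*δ) < phi m r :=
      phi_strictMonoOn m hm (Set.mem_Ici.mpr (by positivity)) (Set.mem_Ici.mpr hr.le) hcon
    have h6 : phi m r ≤ c^2/4 * (δ^2 - 1) := by
      rw [hphi]
      exact mul_le_mul_of_nonneg_left (by nlinarith : s^2-1 ≤ δ^2-1) (by positivity : (0:ℝ) ≤ c^2/4)
    have h7 : c^2/4 * (δ^2 - 1) ≤ (2*m/Real.exp 1) * (25*δ^2/8 - 1) := by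
      have hd : δ^2 - 1 < 0 := by nlinarith
      -- c²/4 ≥ (2m/e)(1-δ²)
      have hA : (2*m/Real.exp 1) * (1 - δ^2) ≤ c^2/4 := by
        have h4 : 8*m/Real.exp 1 = 4*(2*m/Real.exp 1) := by ring
        rw [h4] at hclow; linarith
      have hB := mul_le_mul_of_nonpos_right hA (le_of_lt hd)
      have hC : (0:ℝ) ≤ (2*m/Real.exp 1) * (9*δ^2/8 + δ^4) :=
        mul_nonneg hM.le (by nlinarith)
      nlinarith [hB, hC]
    have h8 := phi_5m m δ hm hδ0.le hδ1
    linarith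

lemma core_abstract (m c s r h δ P t S q : ℝ) (hm : 0 < m) (hr : 0 < r) (hr2 : r ≤ 2*m)
    (hs0 : 0 ≤ s) (hsδ : s ≤ δ) (hh1 : -1 < h) (hh2 : h < 1)
    (hqdef : q = 1 - h^2)
    (hP : 0 < P) (ht0 : 0 ≤ t) (ht2 : t^2 = 2*m*q/P)
    (hS0 : 0 ≤ S) (hSt : t ≤ S) (hSh : |h|/2 ≤ S) :
    (c^2/2) * S * ((q/P)*(1/(2*m) - 3/r) - h^2/(2*m*r))
      - (c^2*s/(8*m*r)) * h^3 - (c^2*s/(4*P)) * (1/(2*m) + 5/r) * (h*q)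
    ≤ -(c^2/(2*m*r)) * (t^3 + (1-δ)*|h|^3/4 - (3*δ/2)*t^2) := by
  have hq : 0 < q := by nlinarith
  have hq1 : q ≤ 1 := by nlinarith [sq_nonneg h]
  have hqP : q = t^2*P/(2*m) := by rw [ht2]; field_simp
  have habs3 : |h|^3 = |h^3| := (abs_pow h 3).symm
  have hhle : |h| ≤ 1 := by rw [abs_le]; constructor <;> linarith
  have hfrac : 1/(2*m) - 3/r ≤ -(2/r) := by
    have h1 : 1/(2*m) ≤ 1/r := one_div_le_one_div_of_le hr hr2
    have h2 : 1/r - 3/r = -(2/r) := by ring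
    linarith
  have hB : (q/P)*(1/(2*m) - 3/r) - h^2/(2*m*r) ≤ -(2*q/(r*P)) - h^2/(2*m*r) := by
    have h1 : (q/P)*(1/(2*m) - 3/r) ≤ (q/P)*(-(2/r)) :=
      mul_le_mul_of_nonneg_left hfrac (by positivity)
    have h2 : (q/P)*(-(2/r)) = -(2*q/(r*P)) := by ring
    linarith
  have hX1 : (0:ℝ) ≤ 2*q/(r*P) := by positivity
  have hX2 : (0:ℝ) ≤ h^2/(2*m*r) := by positivity
  have hSB : S * ((q/P)*(1/(2*m) - 3/r) - h^2/(2*m*r))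
      ≤ -(t*(2*q/(r*P))) - (|h|/2)*(h^2/(2*m*r)) := by
    have h1 := mul_le_mul_of_nonneg_left hB hS0
    have h2 : t*(2*q/(r*P)) ≤ S*(2*q/(r*P)) := mul_le_mul_of_nonneg_right hSt hX1
    have h3 : (|h|/2)*(h^2/(2*m*r)) ≤ S*(h^2/(2*m*r)) := mul_le_mul_of_nonneg_right hSh hX2
    nlinarith [h1, h2, h3]
  have hc2 : (0:ℝ) ≤ c^2/2 := by positivity
  have habsm : |h| * h^2 = |h|^3 := by rw [← sq_abs h]; ring
  have N1 : (c^2/2) * S * ((q/P)*(1/(2*m) - 3/r) - h^2/(2*m*r))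
      ≤ -(c^2/(2*m*r))*t^3 - (c^2/(2*m*r))*(|h|^3/4) := by
    have h1 := mul_le_mul_of_nonneg_left hSB hc2
    have e1 : t*(2*q/(r*P)) = t^3/(m*r) := by rw [hqP]; field_simp
    have e2 : (c^2/2)*(-(t^3/(m*r)) - (|h|/2)*(h^2/(2*m*r)))
        = -(c^2/(2*m*r))*t^3 - (c^2/(2*m*r))*(|h|^3/4) := by
      rw [← habsm]; field_simp; ring
    calc (c^2/2) * S * ((q/P)*(1/(2*m) - 3/r) - h^2/(2*m*r))
        = (c^2/2) * (S * ((q/P)*(1/(2*m) - 3/r) - h^2/(2*m*r))) := by ring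
      _ ≤ (c^2/2)*(-(t*(2*q/(r*P))) - (|h|/2)*(h^2/(2*m*r))) := h1
      _ = (c^2/2)*(-(t^3/(m*r)) - (|h|/2)*(h^2/(2*m*r))) := by rw [e1]
      _ = _ := e2
  have N2 : -((c^2*s/(8*m*r)) * h^3) ≤ (c^2/(2*m*r))*(δ*|h|^3/4) := by
    have h1 : -h^3 ≤ |h|^3 := by rw [habs3]; exact neg_le_abs _
    have h2 : s*(-h^3) ≤ s*|h|^3 := mul_le_mul_of_nonneg_left h1 hs0
    have h3 : s*|h|^3 ≤ δ*|h|^3 := mul_le_mul_of_nonneg_right hsδ (by positivity)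
    have h4 : (0:ℝ) ≤ c^2/(8*m*r) := by positivity
    have h5 : (c^2/(8*m*r))*(s*(-h^3)) ≤ (c^2/(8*m*r))*(δ*|h|^3) :=
      mul_le_mul_of_nonneg_left (le_trans h2 h3) h4
    calc -((c^2*s/(8*m*r)) * h^3) = (c^2/(8*m*r))*(s*(-h^3)) := by ring
      _ ≤ (c^2/(8*m*r))*(δ*|h|^3) := h5
      _ = (c^2/(2*m*r))*(δ*|h|^3/4) := by ring
  have N3 : -((c^2*s/(4*P)) * (1/(2*m) + 5/r) * (h*q)) ≤ (c^2/(2*m*r))*(3*δ/2*t^2) := by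
    have h1 : -(h*q) ≤ q := by nlinarith [neg_le_abs h]
    have h6r : 1/(2*m) + 5/r ≤ 6/r := by
      have := one_div_le_one_div_of_le hr hr2
      have h2 : 1/r + 5/r = 6/r := by ring
      linarith
    have h6rpos : (0:ℝ) ≤ 1/(2*m) + 5/r := by positivity
    have hcs : (0:ℝ) ≤ c^2*s/(4*P) := by positivity
    have step1 : -((c^2*s/(4*P)) * (1/(2*m) + 5/r) * (h*q))
        ≤ (c^2*s/(4*P)) * (1/(2*m) + 5/r) * q := by
      have := mul_le_mul_of_nonneg_left h1 (mul_nonneg hcs h6rpos)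
      nlinarith [this]
    have step2 : (c^2*s/(4*P)) * (1/(2*m) + 5/r) * q ≤ (c^2*s/(4*P)) * (6/r) * q := by
      have := mul_le_mul_of_nonneg_right (mul_le_mul_of_nonneg_left h6r hcs) hq.le
      linarith [this]
    have step3 : (c^2*s/(4*P)) * (6/r) * q ≤ (c^2*δ/(4*P)) * (6/r) * q := by
      have hmul : c^2*s ≤ c^2*δ := mul_le_mul_of_nonneg_left hsδ (by positivity)
      have h7 : (0:ℝ) ≤ (6/r)*q/(4*P) := by positivity
      calc (c^2*s/(4*P)) * (6/r) * q = (c^2*s)*((6/r)*q/(4*P)) := by ring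
        _ ≤ (c^2*δ)*((6/r)*q/(4*P)) := mul_le_mul_of_nonneg_right hmul h7
        _ = _ := by ring
    have e3 : (c^2*δ/(4*P)) * (6/r) * q = (c^2/(2*m*r))*(3*δ/2*t^2) := by
      rw [hqP]; field_simp; ring
    linarith [step1, step2, step3, e3.le, e3.ge]
  have expand : -(c^2/(2*m*r)) * (t^3 + (1-δ)*|h|^3/4 - (3*δ/2)*t^2)
      = (-(c^2/(2*m*r))*t^3 - (c^2/(2*m*r))*(|h|^3/4))
        + (c^2/(2*m*r))*(δ*|h|^3/4) + (c^2/(2*m*r))*(3*δ/2*t^2) := by ring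
  rw [expand]
  linarith [N1, N2, N3]

lemma Fc_core (m c s r h δ : ℝ) (hm : 0 < m) (hr : 0 < r) (hr2 : r ≤ 2*m)
    (hs0 : 0 ≤ s) (hsδ : s ≤ δ) (hh1 : -1 < h) (hh2 : h < 1) :
    Fc m c s r h ≤ -(c^2/(2*m*r)) *
      ((Real.sqrt (2*m*(1-h^2)/phiR m r))^3 + (1-δ)*|h|^3/4
        - (3*δ/2)*(Real.sqrt (2*m*(1-h^2)/phiR m r))^2) := by
  have hP : 0 < phiR m r := by unfold phiR; positivity
  have hq : (0:ℝ) < 1 - h^2 := by nlinarith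
  have harg : 0 ≤ 2*m*(1-h^2)/phiR m r := by positivity
  have ht2 : (Real.sqrt (2*m*(1-h^2)/phiR m r))^2 = 2*m*(1-h^2)/phiR m r := Real.sq_sqrt harg
  have hSt : Real.sqrt (2*m*(1-h^2)/phiR m r) ≤ Real.sqrt (2*m*(1-h^2)/phiR m r + h^2/4) :=
    Real.sqrt_le_sqrt (by nlinarith [sq_nonneg h])
  have hSh : |h|/2 ≤ Real.sqrt (2*m*(1-h^2)/phiR m r + h^2/4) := by
    have e2 : Real.sqrt (h^2/4) = |h|/2 := by
      rw [show h^2/4 = (h/2)^2 by ring, Real.sqrt_sq_eq_abs, abs_div]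
      simp
    rw [← e2]
    exact Real.sqrt_le_sqrt (by linarith)
  exact core_abstract m c s r h δ (phiR m r) _ _ _ hm hr hr2 hs0 hsδ hh1 hh2 rfl hP
    (Real.sqrt_nonneg _) ht2 (Real.sqrt_nonneg _) hSt hSh

lemma E_nonneg (m δ t q h : ℝ) (hm : 0 < m) (hδ0 : 0 < δ) (hδ1 : δ ≤ 1/500)
    (hδm : 500*δ ≤ m) (ht0 : 0 ≤ t) (hq : q = 1 - h^2) (hhle : |h| ≤ 1)
    (hqt : 4*m*q ≤ 5*δ*t^2) :
    0 ≤ t^3 + (1-δ)*|h|^3/4 - (3*δ/2)*t^2 := by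
  have hq0 : 0 ≤ q := by
    have := sq_abs h
    nlinarith [hhle, abs_nonneg h]
  have hh3 : 0 ≤ |h|^3 := pow_nonneg (abs_nonneg h) 3
  rcases le_or_gt (3*δ/2) t with H | H
  · nlinarith [sq_nonneg t, hh3, hδ1]
  · -- t small: q tiny, |h| close to 1
    have ht9 : t^2 ≤ 9*δ^2/4 := by nlinarith
    have hqsmall : m*q ≤ 45*δ^3/16 := by nlinarith [hδ0.le]
    have hqq : q ≤ 45*δ^2/8000 := by nlinarith [hδ0.le, hq0]
    have hqtiny : q ≤ 1/1000000 := by nlinarith [sq_nonneg δ, hδ0.le]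
    have habs4 : |h|^4 = (1-q)^2 := by
      rw [hq, ← sq_abs h]; ring
    have h34 : |h|^4 ≤ |h|^3 := pow_le_pow_of_le_one (abs_nonneg h) hhle (by norm_num)
    have hcube : (3*δ/2)*t^2 ≤ 27*δ^3/8 := by nlinarith [hδ0.le]
    have hδ3 : δ^3 ≤ 1/125000000 := by nlinarith [hδ0.le, sq_nonneg δ]
    nlinarith [pow_nonneg ht0 3, habs4, h34, hqtiny, hcube, hδ3, hq0]

-- E ≥ 20 m w³ when h ≤ 0

lemma E_main (m δ t q h w : ℝ) (hm : 0 < m) (hδ0 : 0 < δ) (hδ1 : δ ≤ 1/500)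
    (hδm : 500*δ ≤ m) (hδim : 500*m*δ ≤ 1)
    (ht0 : 0 ≤ t) (hw0 : 0 ≤ w) (hq : q = 1 - h^2) (hh1 : -1 < h) (hh0 : h ≤ 0)
    (hw4 : w^4 = 1 + h) (hqt : 4*m*q ≤ 5*δ*t^2) :
    20*m*w^3 ≤ t^3 + (1-δ)*|h|^3/4 - (3*δ/2)*t^2 := by
  have hh3 : 0 ≤ |h|^3 := pow_nonneg (abs_nonneg h) 3
  have hq0 : 0 < q := by nlinarith
  rcases le_or_gt h (-3/4) with H | H
  · -- h ≤ -3/4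
    have habs : |h| = -h := abs_of_nonpos (by linarith)
    have hcube : (27:ℝ)/64 ≤ |h|^3 := by rw [habs]; nlinarith
    have h10 : (1:ℝ)/10 ≤ (1-δ)*|h|^3/4 := by nlinarith
    have hqw : (7/4)*w^4 ≤ q := by rw [hq, hw4]; nlinarith
    have hwq : 7*m*w^4 ≤ 5*δ*t^2 := by nlinarith [hm.le]
    have h20 : (3*δ/2)*t^2 ≤ t^3/2 + 1/20 := by
      rcases le_or_gt (3*δ) t with H2 | H2
      · nlinarith [sq_nonneg t]
      · have hδ3 : δ^3 ≤ 1/125000000 := by nlinarith [hδ0.le, sq_nonneg δ]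
        nlinarith [sq_nonneg t, hδ0.le, ht0]
    -- t^6 ≥ 16000000 m^4 w^12
    have hw40 : 0 ≤ 7*m*w^4 := by positivity
    have st1 : (7*m*w^4)^3 ≤ (5*δ*t^2)^3 := pow_le_pow_left₀ hw40 hwq 3
    have st2 : m*δ^3 ≤ 1/125000000 := by
      have h1 : m*δ ≤ 1/500 := by linarith
      have h2 : δ^2 ≤ 1/250000 := by nlinarith [hδ0.le]
      nlinarith [mul_nonneg (mul_nonneg hm.le hδ0.le) (sq_nonneg δ), hδ0.le, hm.le]
    have st3 : 16000000*m^4*w^12 ≤ t^6 := by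
      have e1 : (7*m*w^4)^3 = 343*m^3*w^12 := by ring
      have e2 : (5*δ*t^2)^3 = 125*δ^3*t^6 := by ring
      have hmw : 0 ≤ m^3*w^12 := by positivity
      nlinarith [st1, st2, hmw, mul_pos (mul_pos hδ0 hδ0) hδ0,
        mul_nonneg (pow_nonneg hδ0.le 3) (pow_nonneg ht0 6)]
    have st4 : 4000*m^2*w^6 ≤ t^3 := by
      have hy : 0 ≤ 4000*m^2*w^6 := by positivity
      have hx : 0 ≤ t^3 := pow_nonneg ht0 3
      nlinarith [st3, hy, hx]
    have st5 : 20*m*w^3 ≤ t^3/2 + 1/20 := by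
      have hy : 0 ≤ 20*m*w^3 := by positivity
      have hx : 0 < t^3/2 + 1/20 := by positivity
      nlinarith [st4, sq_nonneg (t^3/2 - 1/20), hy, hx]
    linarith
  · -- -3/4 < h ≤ 0
    have hq716 : (7:ℝ)/16 ≤ q := by rw [hq]; nlinarith
    have hw1 : w ≤ 1 := by nlinarith [pow_nonneg hw0 3, pow_nonneg hw0 2]
    have hw3 : w^3 ≤ 1 := by nlinarith [pow_nonneg hw0 2, pow_nonneg hw0 3]
    have ht175 : 175 ≤ t^2 := by nlinarith [hδ0]
    have ht13 : 13 ≤ t := by nlinarith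
    have hδt : δ*t^2 ≤ t^2/500 := by nlinarith [sq_nonneg t]
    have hm175 : m ≤ t^2/175 := by nlinarith
    have ht3 : 13*t^2 ≤ t^3 := by nlinarith [sq_nonneg t]
    nlinarith [hh3, hδ1, sq_nonneg t, hδ0.le]

lemma Fc_bounds (m c s r h δ : ℝ) (hm : 0 < m) (hδ0 : 0 < δ) (hδ1 : δ ≤ 1/500)
    (hδm : 500*δ ≤ m) (hδim : 500*m*δ ≤ 1)
    (hclow : (8*m/Real.exp 1)*(1-δ^2) ≤ c^2)
    (hs0 : 0 ≤ s) (hsδ : s ≤ δ) (hr : 0 < r) (hr2 : r ≤ 2*m) (hr5 : r ≤ 5*m*δ)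
    (hh1 : -1 < h) (hh2 : h < 1) :
    Fc m c s r h ≤ 0 ∧
      (h ≤ 0 → Fc m c s r h ≤ -(4/δ) * (Real.sqrt (Real.sqrt (1+h)))^3) := by
  have hP : 0 < phiR m r := by unfold phiR; positivity
  have hq0 : (0:ℝ) < 1 - h^2 := by nlinarith
  have hhle : |h| ≤ 1 := by rw [abs_le]; constructor <;> linarith
  set t : ℝ := Real.sqrt (2*m*(1-h^2)/phiR m r) with htdef
  have ht0 : 0 ≤ t := Real.sqrt_nonneg _
  have ht2 : t^2 = 2*m*(1-h^2)/phiR m r := Real.sq_sqrt (by positivity)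
  -- P ≤ 5δ/2
  have hP52 : phiR m r ≤ 5*δ/2 := by
    have hexp : Real.exp (r/(2*m) - 1) ≤ 1 := by
      rw [Real.exp_le_one_iff]
      have : r/(2*m) ≤ 1 := by rw [div_le_one (by positivity)]; linarith
      linarith
    have h1 : phiR m r ≤ r/(2*m) := by
      unfold phiR
      nlinarith [div_nonneg hr.le (by positivity : (0:ℝ) ≤ 2*m)]
    have h2 : r/(2*m) ≤ 5*δ/2 := by
      rw [div_le_iff₀ (by positivity)]; nlinarith
    linarith
  have hqt : 4*m*(1-h^2) ≤ 5*δ*t^2 := by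
    have e : t^2 * phiR m r = 2*m*(1-h^2) := by
      rw [ht2]; field_simp
    nlinarith [mul_le_mul_of_nonneg_left hP52 (sq_nonneg t)]
  have hcore := Fc_core m c s r h δ hm hr hr2 hs0 hsδ hh1 hh2
  have hE0 := E_nonneg m δ t (1-h^2) h hm hδ0 hδ1 hδm ht0 rfl hhle hqt
  have hK0 : (0:ℝ) ≤ c^2/(2*m*r) := by positivity
  constructor
  · nlinarith [mul_nonneg hK0 hE0]
  · intro hh0
    set w : ℝ := Real.sqrt (Real.sqrt (1+h)) with hwdef
    have hw0 : 0 ≤ w := Real.sqrt_nonneg _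
    have hu0 : (0:ℝ) ≤ 1 + h := by linarith
    have hw4 : w^4 = 1 + h := by
      have e1 : w^2 = Real.sqrt (1+h) := Real.sq_sqrt (Real.sqrt_nonneg _)
      have e2 : (Real.sqrt (1+h))^2 = 1 + h := Real.sq_sqrt hu0
      calc w^4 = (w^2)^2 := by ring
        _ = (Real.sqrt (1+h))^2 := by rw [e1]
        _ = 1 + h := e2
    have hE := E_main m δ t (1-h^2) h w hm hδ0 hδ1 hδm hδim ht0 hw0 rfl hh1 hh0 hw4 hqt
    -- c^2 ≥ 2m
    have he3 : Real.exp 1 < 3 := lt_trans Real.exp_one_lt_d9 (by norm_num)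
    have he0 : 0 < Real.exp 1 := Real.exp_pos 1
    have h83 : 8*m/3 ≤ 8*m/Real.exp 1 := by
      apply div_le_div_of_nonneg_left (by positivity) he0 he3.le
    have hδq : (0:ℝ) ≤ 1 - δ^2 := by nlinarith [hδ0.le]
    have hc2m : 2*m ≤ c^2 := by
      nlinarith [mul_le_mul_of_nonneg_right h83 hδq, hδ0.le, sq_nonneg δ]
    -- (4/δ) w^3 ≤ K * E
    have hw3 : (0:ℝ) ≤ w^3 := by positivity
    have hstep1 : (4/δ)*w^3 ≤ (20*m/r)*w^3 := by
      apply mul_le_mul_of_nonneg_right _ hw3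
      rw [div_le_div_iff₀ hδ0 hr]
      nlinarith
    have hKr : 1/r*(2*m) ≤ c^2/(2*m*r)*(2*m) := by
      have e : (1:ℝ)/r = 2*m/(2*m*r) := by field_simp
      have : 2*m/(2*m*r) ≤ c^2/(2*m*r) := div_le_div_of_nonneg_right hc2m (by positivity)
      rw [e]
      exact mul_le_mul_of_nonneg_right this (by positivity)
    have hstep2 : (20*m/r)*w^3 ≤ (c^2/(2*m*r))*(20*m*w^3) := by
      have h1 : (20*m/r)*w^3 = (1/r*(2*m))*(10*w^3) := by ring
      have h2 : (c^2/(2*m*r))*(20*m*w^3) = (c^2/(2*m*r)*(2*m))*(10*w^3) := by ring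
      rw [h1, h2]
      exact mul_le_mul_of_nonneg_right hKr (by positivity)
    have hstep3 : (c^2/(2*m*r))*(20*m*w^3) ≤ (c^2/(2*m*r)) *
        (t^3 + (1-δ)*|h|^3/4 - (3*δ/2)*t^2) := by
      apply mul_le_mul_of_nonneg_left _ hK0
      linarith
    have : -(4/δ) * w^3 = -((4/δ)*w^3) := by ring
    rw [this]
    linarith [hcore, hstep1, hstep2, hstep3]

lemma antitone_aux {f : ℝ → ℝ} {f' : ℝ → ℝ} {a b : ℝ}
    (hf : ∀ x ∈ Set.Icc a b, HasDerivWithinAt f (f' x) (Set.Icc a b) x)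
    (hf' : ∀ x ∈ Set.Ioo a b, f' x ≤ 0) : AntitoneOn f (Set.Icc a b) := by
  apply antitoneOn_of_deriv_nonpos (convex_Icc a b)
  · exact fun x hx => (hf x hx).continuousWithinAt
  · intro x hx
    rw [interior_Icc] at hx
    exact ((hf x (Set.Ioo_subset_Icc_self hx)).hasDerivAt
      (Icc_mem_nhds hx.1 hx.2)).differentiableAt.differentiableWithinAt
  · intro x hx
    rw [interior_Icc] at hx
    rw [((hf x (Set.Ioo_subset_Icc_self hx)).hasDerivAt (Icc_mem_nhds hx.1 hx.2)).deriv]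
    exact hf' x hx

/-- There exists `c₀ ∈ (0, c_crit)` such that for every
`c ∈ (c₀, c_crit)` there is no solution `h : [0,1] → (-1,1)` of the transformed Jang
equation with `h(0) = 0`. -/
theorem transformed_no_solution (m : ℝ) (hm : 0 < m) :
    ∃ c₀ ∈ Set.Ioo 0 (cCrit m), ∀ c, c₀ < c → c < cCrit m →
      ∀ Rc : ℝ → ℝ, (∀ s, 0 < Rc s ∧ phi m (Rc s) = c^2/4 * (s^2 - 1)) →
        ¬ ∃ h : ℝ → ℝ, h 0 = 0 ∧
            ∀ s ∈ Set.Icc (0:ℝ) 1, h s ∈ Set.Ioo (-1:ℝ) 1 ∧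
              HasDerivWithinAt h (Fc m c s (Rc s) (h s)) (Set.Icc (0:ℝ) 1) s := by
  have he0 : 0 < Real.exp 1 := Real.exp_pos 1
  set δ : ℝ := min m m⁻¹ / 500 with hδdef
  have hmin0 : 0 < min m m⁻¹ := lt_min hm (by positivity)
  have hδ0 : 0 < δ := by positivity
  have hmin1 : min m m⁻¹ ≤ 1 := by
    rcases le_total m 1 with h | h
    · exact le_trans (min_le_left _ _) h
    · exact le_trans (min_le_right _ _) (by
        rw [inv_le_one_iff₀]; right; exact h)
  have hδ1 : δ ≤ 1/500 := by
    rw [hδdef]; linarith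
  have hδm : 500*δ ≤ m := by
    have : min m m⁻¹ ≤ m := min_le_left _ _
    rw [hδdef]; linarith
  have hδim : 500*m*δ ≤ 1 := by
    have h1 : min m m⁻¹ ≤ m⁻¹ := min_le_right _ _
    have h2 : m * min m m⁻¹ ≤ m * m⁻¹ := mul_le_mul_of_nonneg_left h1 hm.le
    rw [mul_inv_cancel₀ (ne_of_gt hm)] at h2
    rw [hδdef]
    calc 500*m*(min m m⁻¹/500) = m * min m m⁻¹ := by ring
      _ ≤ 1 := h2
  have hA0 : 0 < 8*m/Real.exp 1 := by positivity
  have hδsq : (0:ℝ) < 1 - δ^2 := by nlinarith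
  have hδsq1 : 1 - δ^2 < 1 := by nlinarith
  refine ⟨Real.sqrt ((8*m/Real.exp 1)*(1-δ^2)), ⟨Real.sqrt_pos.2 (by positivity), ?_⟩, ?_⟩
  · unfold cCrit
    apply Real.sqrt_lt_sqrt (by positivity)
    nlinarith
  intro c hc₀c hccrit Rc hRc
  rintro ⟨h, h0, hsol⟩
  have hc₀0 : 0 ≤ Real.sqrt ((8*m/Real.exp 1)*(1-δ^2)) := Real.sqrt_nonneg _
  have hc0 : 0 < c := lt_of_le_of_lt hc₀0 hc₀c
  have hclow : (8*m/Real.exp 1)*(1-δ^2) ≤ c^2 := by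
    have h1 : (Real.sqrt ((8*m/Real.exp 1)*(1-δ^2)))^2 = (8*m/Real.exp 1)*(1-δ^2) :=
      Real.sq_sqrt (by positivity)
    nlinarith [hc₀c, hc₀0]
  have hchigh : c^2 ≤ 8*m/Real.exp 1 := by
    have h1 : (cCrit m)^2 = 8*m/Real.exp 1 := Real.sq_sqrt (by positivity)
    nlinarith [hccrit, hc0]
  -- facts for each s in [0, δ]
  have hsub : Set.Icc (0:ℝ) δ ⊆ Set.Icc (0:ℝ) 1 :=
    Set.Icc_subset_Icc le_rfl (by linarith)
  have hmem : ∀ s ∈ Set.Icc (0:ℝ) δ, (-1 < h s ∧ h s < 1) ∧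
      HasDerivWithinAt h (Fc m c s (Rc s) (h s)) (Set.Icc (0:ℝ) δ) s := by
    intro s hs
    obtain ⟨hIoo, hder⟩ := hsol s (hsub hs)
    exact ⟨⟨hIoo.1, hIoo.2⟩, hder.mono hsub⟩
  have hrb : ∀ s ∈ Set.Icc (0:ℝ) δ, Rc s ≤ 2*m ∧ Rc s ≤ 5*m*δ := fun s hs =>
    r_bounds m δ c s (Rc s) hm hδ0 hδ1 hclow hchigh hs.1 hs.2 (hRc s).1 (hRc s).2
  -- Step 1: h is antitone on [0, δ], hence h ≤ 0 there
  have hanti : AntitoneOn h (Set.Icc (0:ℝ) δ) := by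
    apply antitone_aux (f' := fun s => Fc m c s (Rc s) (h s))
    · exact fun x hx => (hmem x hx).2
    · intro x hx
      have hx' := Set.Ioo_subset_Icc_self hx
      obtain ⟨⟨h1, h2⟩, _⟩ := hmem x hx'
      obtain ⟨hr2, hr5⟩ := hrb x hx'
      exact (Fc_bounds m c x (Rc x) (h x) δ hm hδ0 hδ1 hδm hδim hclow
        hx'.1 hx'.2 (hRc x).1 hr2 hr5 h1 h2).1
  have hle0 : ∀ s ∈ Set.Icc (0:ℝ) δ, h s ≤ 0 := by
    intro s hs
    have := hanti (Set.left_mem_Icc.2 hδ0.le) hs hs.1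
    rw [h0] at this
    exact this
  -- Step 2: the Lyapunov function g
  set g : ℝ → ℝ := fun s => Real.sqrt (Real.sqrt (1 + h s)) + s/δ with hgdef
  have hganti : AntitoneOn g (Set.Icc (0:ℝ) δ) := by
    apply antitone_aux
      (f' := fun s => Fc m c s (Rc s) (h s) / (2 * Real.sqrt (1 + h s))
        / (2 * Real.sqrt (Real.sqrt (1 + h s))) + 1/δ)
    · intro x hx
      obtain ⟨⟨h1, h2⟩, hder⟩ := hmem x hx
      have hu0 : (0:ℝ) < 1 + h x := by linarith
      have hu : HasDerivWithinAt (fun s => 1 + h s) (Fc m c x (Rc x) (h x))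
          (Set.Icc (0:ℝ) δ) x := hder.const_add 1
      have hs1 := hu.sqrt (ne_of_gt hu0)
      have hs2 := hs1.sqrt (ne_of_gt (Real.sqrt_pos.2 hu0))
      exact hs2.add ((hasDerivWithinAt_id x _).div_const δ)
    · intro x hx
      have hx' := Set.Ioo_subset_Icc_self hx
      obtain ⟨⟨h1, h2⟩, _⟩ := hmem x hx'
      obtain ⟨hr2, hr5⟩ := hrb x hx'
      have hkey := (Fc_bounds m c x (Rc x) (h x) δ hm hδ0 hδ1 hδm hδim hclow
        hx'.1 hx'.2 (hRc x).1 hr2 hr5 h1 h2).2 (hle0 x hx')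
      have hu0 : (0:ℝ) < 1 + h x := by linarith
      set w : ℝ := Real.sqrt (Real.sqrt (1 + h x)) with hwdef
      have hw0 : 0 < w := Real.sqrt_pos.2 (Real.sqrt_pos.2 hu0)
      have hw2 : w^2 = Real.sqrt (1 + h x) := Real.sq_sqrt (Real.sqrt_nonneg _)
      have hden : Fc m c x (Rc x) (h x) / (2 * Real.sqrt (1 + h x))
          / (2 * w) = Fc m c x (Rc x) (h x) / (4 * w^3) := by
        rw [← hw2, div_div]
        congr 1
        ring
      rw [hden]
      have hw3 : (0:ℝ) < 4 * w^3 := by positivity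
      have e2 : (-(4/δ) * w^3)/(4*w^3) = -(1/δ) := by
        field_simp [ne_of_gt hδ0, ne_of_gt hw0]
      have h3 : Fc m c x (Rc x) (h x) / (4 * w^3) ≤ -(1/δ) := by
        rw [← e2]
        exact div_le_div_of_nonneg_right hkey hw3.le
      linarith
  -- conclude
  have hδmem : δ ∈ Set.Icc (0:ℝ) δ := Set.right_mem_Icc.2 hδ0.le
  have h0mem : (0:ℝ) ∈ Set.Icc (0:ℝ) δ := Set.left_mem_Icc.2 hδ0.le
  have hgle := hganti h0mem hδmem hδ0.le
  have hg0 : g 0 = 1 := by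
    rw [hgdef]
    simp [h0, Real.sqrt_one]
  have hgδ : g δ = Real.sqrt (Real.sqrt (1 + h δ)) + 1 := by
    rw [hgdef]
    simp [div_self (ne_of_gt hδ0)]
  have hhδ : -1 < h δ := ((hmem δ hδmem).1).1
  have : 0 < Real.sqrt (Real.sqrt (1 + h δ)) :=
    Real.sqrt_pos.2 (Real.sqrt_pos.2 (by linarith))
  rw [hg0, hgδ] at hgle
  linarith
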